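/- For any superbubble ⟨s, t⟩ in a directed acyclic graph G with a single source and single sink, there exists a child c of s (i.e., an edge (s, c) ∈ E) such that c has exactly one parent, namely s. -/

import Mathlib

/-- `v` is reachable from `s` by a directed path whose internal vertices
(all vertices except the endpoints) avoid `avoid`. -/
def ReachWithout {V : Type*} (E : V → V → Prop) (avoid s v : V) : Prop :=
  s = v ∨ ∃ w, Relation.ReflTransGen (fun a b => E a b ∧ b ≠ avoid) s w ∧ E w v

/-- `t` is reachable from `v` by a directed path whose internal vertices avoid `avoid`. -/
def CoReachWithout {V : Type*} (E : V → V → Prop) (avoid v t : V) : Prop :=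
  v = t ∨ ∃ w, E v w ∧ Relation.ReflTransGen (fun a b => E a b ∧ a ≠ avoid) w t

/-- The subgraph induced by `U` is acyclic. -/
def AcyclicOn {V : Type*} (E : V → V → Prop) (U : Set V) : Prop :=
  ∀ v, ¬ Relation.TransGen (fun a b => E a b ∧ a ∈ U ∧ b ∈ U) v v

/-- The directed graph is acyclic. -/
def Acyclic {V : Type*} (E : V → V → Prop) : Prop :=
  ∀ v, ¬ Relation.TransGen E v v

/-- The reachability, matching and acyclicity conditions of a superbubble
(Definition 1, without minimality). -/
def SBCore {V : Type*} (E : V → V → Prop) (s t : V) : Prop :=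
  s ≠ t ∧ Relation.TransGen E s t ∧
  (∀ v, ReachWithout E t s v ↔ CoReachWithout E s v t) ∧
  AcyclicOn E {v | ReachWithout E t s v}

/-- `⟨s, t⟩` is a superbubble: reachability, matching, acyclicity and minimality. -/
def Superbubble {V : Type*} (E : V → V → Prop) (s t : V) : Prop :=
  SBCore E s t ∧ ∀ t', ReachWithout E t s t' → t' ≠ t → ¬ SBCore E s t'

/-- For any superbubble ⟨s, t⟩ in a DAG with a single source and single sink,
there is a child c of s whose only parent is s. -/
theorem entrance_has_child_with_unique_parent {V : Type*} [Fintype V] (E : V → V → Prop)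
    (hA : Acyclic E)
    (hSource : ∃! r : V, ∀ u, ¬ E u r)
    (hSink : ∃! q : V, ∀ u, ¬ E q u)
    (s t : V) (hSB : Superbubble E s t) :
    ∃ c, E s c ∧ ∀ u, E u c → u = s := by
  obtain ⟨⟨hst, hreach, hmatch, hacyc⟩, _hmin⟩ := hSB
  -- t is in the bubble
  have htU : ReachWithout E t s t := by
    have key : ∀ v, Relation.ReflTransGen E s v →
        ReachWithout E t s t ∨ Relation.ReflTransGen (fun a b => E a b ∧ b ≠ t) s v := by
      intro v hv
      induction hv with
      | refl => exact Or.inr .refl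
      | @tail b c hab hbc ih =>
        rcases ih with h | h
        · exact Or.inl h
        · by_cases hc : c = t
          · exact Or.inl (Or.inr ⟨b, h, hc ▸ hbc⟩)
          · exact Or.inr (h.tail ⟨hbc, hc⟩)
    rcases key t hreach.to_reflTransGen with h | h
    · exact h
    · cases h with
      | refl => exact absurd rfl hst
      | tail _ hstep => exact absurd rfl hstep.2
  -- every parent of a non-`s` bubble vertex is also in the bubble and is not `t`
  have hparent : ∀ v u, ReachWithout E t s v → v ≠ s → E u v →
      ReachWithout E t s u ∧ u ≠ t := by
    intro v u hvU hvs huv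
    have hvt : CoReachWithout E s v t := (hmatch v).mp hvU
    have huco : CoReachWithout E s u t := by
      rcases hvt with rfl | ⟨w, hvw, hwt⟩
      · exact Or.inr ⟨v, huv, .refl⟩
      · exact Or.inr ⟨v, huv, .head ⟨hvw, hvs⟩ hwt⟩
    have hvTt : Relation.TransGen E v t ∨ v = t := by
      rcases hvt with rfl | ⟨w, hvw, hwt⟩
      · exact Or.inr rfl
      · exact Or.inl (Relation.TransGen.head' hvw (Relation.ReflTransGen.mono (r := fun a b => E a b ∧ a ≠ s) (p := E) (fun a b h => h.1) w t hwt))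
    refine ⟨(hmatch u).mpr huco, ?_⟩
    rintro rfl
    rcases hvTt with h | rfl
    · exact hA _ (Relation.TransGen.head huv h)
    · exact hA _ (Relation.TransGen.single huv)
  -- the set of bubble vertices other than `s`
  have hWt : ReachWithout E t s t ∧ t ≠ s := ⟨htU, fun h => hst h.symm⟩
  -- well-foundedness of the induced edge relation on that set
  have hRwf : WellFounded (fun a b : V =>
      E a b ∧ (ReachWithout E t s a ∧ a ≠ s) ∧ (ReachWithout E t s b ∧ b ≠ s)) := by
    set R : V → V → Prop := fun a b =>
      E a b ∧ (ReachWithout E t s a ∧ a ≠ s) ∧ (ReachWithout E t s b ∧ b ≠ s) with hR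
    have hirr : ∀ v, ¬ Relation.TransGen R v v := fun v hv =>
      hacyc v (Relation.TransGen.mono (r := R) (p := fun a b => E a b ∧ a ∈ {v | ReachWithout E t s v} ∧ b ∈ {v | ReachWithout E t s v}) (fun a b h => ⟨h.1, h.2.1.1, h.2.2.1⟩) v v hv)
    haveI : IsTrans V (Relation.TransGen R) := ⟨fun _ _ _ => Relation.TransGen.trans⟩
    haveI : IsIrrefl V (Relation.TransGen R) := ⟨hirr⟩
    exact Subrelation.wf (fun h => Relation.TransGen.single h)
      (Finite.wellFounded_of_trans_of_irrefl (Relation.TransGen R))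
  obtain ⟨m, hmW, hmin⟩ := hRwf.has_min {v | ReachWithout E t s v ∧ v ≠ s} ⟨t, hWt⟩
  -- every parent of m is s
  have hall : ∀ u, E u m → u = s := by
    intro u hum
    obtain ⟨huU, _⟩ := hparent m u hmW.1 hmW.2 hum
    by_contra hus
    exact hmin u ⟨huU, hus⟩ ⟨hum, ⟨huU, hus⟩, hmW⟩
  -- m has some parent
  rcases hmW.1 with h | ⟨w, _, hwm⟩
  · exact absurd h.symm hmW.2
  · have hws := hall w hwm
    subst hws
    exact ⟨m, hwm, hall⟩
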